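/- Let n ≥ 1 be an integer and A, B ∈ ℝ^{n×n}. Let u = e_j be a standard basis vector such that ‖(B − A)e_j‖ = max_{i ∈ {1,…,n}} ‖(B − A)e_i‖ (the greedy choice), and set B₊ := Broyd(B, A, u). Then ‖B₊ − A‖_F² ≤ (1 − 1/n) ‖B − A‖_F². -/

import Mathlib

open Matrix

noncomputable def vecNorm {n : ℕ} (u : Fin n → ℝ) : ℝ := Real.sqrt (∑ i, u i ^ 2)

noncomputable def frobNorm {n : ℕ} (M : Matrix (Fin n) (Fin n) ℝ) : ℝ :=
  Real.sqrt (∑ i, ∑ j, M i j ^ 2)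

noncomputable def specNorm {n : ℕ} (M : Matrix (Fin n) (Fin n) ℝ) : ℝ :=
  sSup {r : ℝ | ∃ u : Fin n → ℝ, vecNorm u = 1 ∧ r = vecNorm (M.mulVec u)}

noncomputable def broyd {n : ℕ} (B A : Matrix (Fin n) (Fin n) ℝ) (u : Fin n → ℝ) :
    Matrix (Fin n) (Fin n) ℝ :=
  B + (∑ i, u i ^ 2)⁻¹ • ((A - B) * Matrix.vecMulVec u u)

noncomputable def matCLM {n : ℕ} (M : Matrix (Fin n) (Fin n) ℝ) :
    (Fin n → ℝ) →L[ℝ] (Fin n → ℝ) :=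
  LinearMap.toContinuousLinearMap M.mulVecLin

lemma vecNorm_sq {n : ℕ} (u : Fin n → ℝ) : vecNorm u ^ 2 = ∑ i, u i ^ 2 := by
  rw [vecNorm, Real.sq_sqrt]
  positivity

lemma frobNorm_sq {n : ℕ} (M : Matrix (Fin n) (Fin n) ℝ) :
    frobNorm M ^ 2 = ∑ i, ∑ j, M i j ^ 2 := by
  rw [frobNorm, Real.sq_sqrt]
  positivity

theorem greedy_broyden_progress {n : ℕ} (hn : 1 ≤ n)
    (A B : Matrix (Fin n) (Fin n) ℝ) (j : Fin n)
    (hj : ∀ i : Fin n,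
      vecNorm ((B - A).mulVec (Pi.single i 1)) ≤ vecNorm ((B - A).mulVec (Pi.single j 1))) :
    frobNorm (broyd B A (Pi.single j 1) - A) ^ 2
      ≤ (1 - 1 / (n : ℝ)) * frobNorm (B - A) ^ 2 := by
  set X := B - A with hX
  have hsum : (∑ i, (Pi.single j 1 : Fin n → ℝ) i ^ 2) = 1 := by
    simp [Pi.single_apply]
  have hcol : ∀ i k, X.mulVec (Pi.single i 1) k = X k i := by
    intro i k
    simp [Matrix.mulVec, dotProduct, Pi.single_apply, mul_ite]
  have hM : ∀ i k, (broyd B A (Pi.single j 1) - A) i k =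
      if k = j then 0 else X i k := by
    intro i k
    have : (((A - B) * Matrix.vecMulVec (Pi.single j 1) (Pi.single j 1) :
          Matrix (Fin n) (Fin n) ℝ)) i k
        = (A - B) i j * (Pi.single j 1 : Fin n → ℝ) k := by
      simp [Matrix.mul_apply, Matrix.vecMulVec_apply, Pi.single_apply, mul_ite]
    simp only [broyd, hsum, inv_one, one_smul, Matrix.sub_apply, Matrix.add_apply, this]
    by_cases hk : k = j <;> simp [hk, hX, Pi.single_apply, Matrix.sub_apply] <;> ring
  -- column norms squared
  have hcolsq : ∀ i, vecNorm (X.mulVec (Pi.single i 1)) ^ 2 = ∑ k, X k i ^ 2 := by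
    intro i
    rw [vecNorm_sq]
    exact Finset.sum_congr rfl fun k _ => by rw [hcol]
  have hjsq : ∀ i : Fin n, (∑ k, X k i ^ 2) ≤ ∑ k, X k j ^ 2 := by
    intro i
    have h0 : vecNorm (X.mulVec (Pi.single i 1)) ^ 2 ≤ vecNorm (X.mulVec (Pi.single j 1)) ^ 2 :=
      pow_le_pow_left₀ (Real.sqrt_nonneg _) (hj i) 2
    rw [hcolsq i, hcolsq j] at h0
    exact h0
  have hF : frobNorm X ^ 2 = ∑ i, ∑ k, X i k ^ 2 := frobNorm_sq X
  have hFswap : frobNorm X ^ 2 = ∑ i, ∑ k, X k i ^ 2 := by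
    rw [hF, Finset.sum_comm]
  have hFle : frobNorm X ^ 2 ≤ (n : ℝ) * ∑ k, X k j ^ 2 := by
    rw [hFswap]
    calc ∑ i, ∑ k, X k i ^ 2 ≤ ∑ _i : Fin n, ∑ k, X k j ^ 2 :=
          Finset.sum_le_sum fun i _ => hjsq i
      _ = (n : ℝ) * ∑ k, X k j ^ 2 := by simp [Finset.sum_const, mul_comm]
  have hLHS : frobNorm (broyd B A (Pi.single j 1) - A) ^ 2
      = frobNorm X ^ 2 - ∑ k, X k j ^ 2 := by
    rw [frobNorm_sq, hF]
    have : ∀ i, ∑ k, (broyd B A (Pi.single j 1) - A) i k ^ 2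
        = (∑ k, X i k ^ 2) - X i j ^ 2 := by
      intro i
      have h1 : ∑ k, (broyd B A (Pi.single j 1) - A) i k ^ 2
          = ∑ k, (if k = j then 0 else X i k ^ 2) := by
        refine Finset.sum_congr rfl fun k _ => ?_
        rw [hM]
        by_cases hk : k = j <;> simp [hk]
      have h2 : ∑ k, X i k ^ 2 = X i j ^ 2 + ∑ k, (if k = j then 0 else X i k ^ 2) := by
        have hpt : ∀ k, X i k ^ 2 =
            (if k = j then X i j ^ 2 else 0) + (if k = j then 0 else X i k ^ 2) := by
          intro k; by_cases hk : k = j <;> simp [hk]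
        rw [Finset.sum_congr rfl fun k _ => hpt k, Finset.sum_add_distrib,
          Finset.sum_ite_eq' Finset.univ j]
        simp
      rw [h1]; linarith
    rw [Finset.sum_congr rfl fun i _ => this i, Finset.sum_sub_distrib]
  rw [hLHS]
  have hn' : (0:ℝ) < n := by exact_mod_cast Nat.lt_of_lt_of_le Nat.zero_lt_one hn
  have key : frobNorm X ^ 2 / n ≤ ∑ k, X k j ^ 2 := by
    rw [div_le_iff₀ hn']
    linarith [hFle]
  have : (1 - 1 / (n:ℝ)) * frobNorm X ^ 2 = frobNorm X ^ 2 - frobNorm X ^ 2 / n := by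
    field_simp
  rw [this]
  linarith
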